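/- In ℝ², let L := ℝ×{0}, h > 0, L′ := ℝ×{h}, 0 < a ≤ 1/2, and μ₁ := (1−a)·H¹|_L + a·H¹|_{L′}. Then for every x ∈ L: (i) α_{μ₁}¹(x,r) = 0 for all 0 < r ≤ h, and (ii) α_{μ₁}¹(x,r) ≤ C·a·h/r for all r > h, where C > 0 is an absolute constant. -/

import Mathlib

open MeasureTheory Metric Set
open scoped ENNReal NNReal

noncomputable section

/-- `F_B(σ,ν)`: sup over 1-Lipschitz functions supported in `B` of `|∫φ dσ − ∫φ dν|`. -/
def FB {n : ℕ} (B : Set (EuclideanSpace ℝ (Fin n)))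
    (σ ν : Measure (EuclideanSpace ℝ (Fin n))) : ℝ :=
  sSup { t : ℝ | ∃ φ : EuclideanSpace ℝ (Fin n) → ℝ,
    LipschitzWith 1 φ ∧ Function.support φ ⊆ B ∧
    t = |(∫ y, φ y ∂σ) - (∫ y, φ y ∂ν)| }

/-- An affine `d`-plane: a nonempty affine subspace whose direction has dimension `d`. -/
def IsAffineDPlane {n : ℕ} (d : ℕ)
    (L : AffineSubspace ℝ (EuclideanSpace ℝ (Fin n))) : Prop :=
  (L : Set (EuclideanSpace ℝ (Fin n))).Nonempty ∧ Module.finrank ℝ L.direction = d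

/-- The coefficient `α_μ^d(x,r)`. -/
def alphaCoef {n : ℕ} (d : ℕ) (μ : Measure (EuclideanSpace ℝ (Fin n)))
    (x : EuclideanSpace ℝ (Fin n)) (r : ℝ) : ℝ :=
  (1 / (r * (μ (ball x r)).toReal)) *
    sInf { t : ℝ | ∃ (c : ℝ) (L : AffineSubspace ℝ (EuclideanSpace ℝ (Fin n))),
      0 ≤ c ∧ IsAffineDPlane d L ∧
      t = FB (ball x r) μ
        ((ENNReal.ofReal c) • (μH[(d:ℝ)]).restrict (L : Set (EuclideanSpace ℝ (Fin n)))) }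


section Aux
open Function

/-! ### Auxiliary lemmas -/

/-- The horizontal line embedding `t ↦ (t, c)`. -/
def emb2 (c : ℝ) : ℝ → EuclideanSpace ℝ (Fin 2) :=
  fun t => (WithLp.equiv 2 (Fin 2 → ℝ)).symm ![t, c]

@[simp] lemma emb2_apply0 (c t : ℝ) : emb2 c t 0 = t := rfl
@[simp] lemma emb2_apply1 (c t : ℝ) : emb2 c t 1 = c := rfl

lemma isometry_emb2 (c : ℝ) : Isometry (emb2 c) := by
  apply Isometry.of_dist_eq
  intro t s
  rw [EuclideanSpace.dist_eq]
  simp [Fin.sum_univ_two, Real.dist_eq, Real.sqrt_sq_eq_abs]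

lemma me_emb2 (c : ℝ) : MeasurableEmbedding (emb2 c) :=
  ((isometry_emb2 c).isClosedEmbedding).measurableEmbedding

lemma line_eq_range (c : ℝ) : {p : EuclideanSpace ℝ (Fin 2) | p 1 = c} = Set.range (emb2 c) := by
  ext p
  constructor
  · intro hp
    refine ⟨p 0, ?_⟩
    ext i
    fin_cases i <;> simp [hp.symm]
  · rintro ⟨t, rfl⟩; simp

lemma restrict_line (c : ℝ) :
    (μH[(1:ℝ)]).restrict {p : EuclideanSpace ℝ (Fin 2) | p 1 = c}
      = Measure.map (emb2 c) volume := by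
  ext s hs
  rw [Measure.restrict_apply hs, (me_emb2 c).map_apply,
    line_eq_range, ← Set.image_preimage_eq_inter_range,
    (isometry_emb2 c).hausdorffMeasure_image (Or.inl one_pos.le),
    MeasureTheory.hausdorffMeasure_real]

lemma dist_emb2 (c t : ℝ) (x : EuclideanSpace ℝ (Fin 2)) :
    dist (emb2 c t) x = Real.sqrt ((t - x 0)^2 + (c - x 1)^2) := by
  rw [EuclideanSpace.dist_eq]
  simp [Fin.sum_univ_two, Real.dist_eq, sq_abs]

lemma dist_emb2_emb2 (c c' t : ℝ) : dist (emb2 c t) (emb2 c' t) = |c - c'| := by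
  rw [dist_emb2]
  simp [Real.sqrt_sq_eq_abs]

lemma preimage_ball_subset (c r : ℝ) (x : EuclideanSpace ℝ (Fin 2)) :
    (emb2 c) ⁻¹' (ball x r) ⊆ Ioo (x 0 - r) (x 0 + r) := by
  intro t ht
  simp only [mem_preimage, mem_ball, dist_emb2] at ht
  have h1 : |t - x 0| < r := by
    have h0 : |t - x 0| = Real.sqrt ((t - x 0)^2) := (Real.sqrt_sq_eq_abs _).symm
    calc |t - x 0| ≤ Real.sqrt ((t - x 0)^2 + (c - x 1)^2) := by
          rw [h0]; exact Real.sqrt_le_sqrt (le_add_of_nonneg_right (by positivity))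
      _ < r := ht
  rw [abs_lt] at h1
  constructor <;> linarith [h1.1, h1.2]

lemma preimage_ball_eq (r : ℝ) (hr : 0 < r) (x : EuclideanSpace ℝ (Fin 2)) (hx : x 1 = 0) :
    (emb2 0) ⁻¹' (ball x r) = Ioo (x 0 - r) (x 0 + r) := by
  apply Subset.antisymm (preimage_ball_subset 0 r x)
  intro t ht
  simp only [mem_Ioo] at ht
  simp only [mem_preimage, mem_ball, dist_emb2, hx]
  have habs : |t - x 0| < r := abs_lt.2 ⟨by linarith, by linarith⟩
  calc Real.sqrt ((t - x 0)^2 + (0 - 0)^2) = |t - x 0| := by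
        rw [show (0:ℝ) - 0 = 0 by ring]; simp [Real.sqrt_sq_eq_abs]
    _ < r := habs

lemma preimage_ball_empty (c r : ℝ) (hrc : r ≤ c) (hc : 0 < c)
    (x : EuclideanSpace ℝ (Fin 2)) (hx : x 1 = 0) :
    (emb2 c) ⁻¹' (ball x r) = ∅ := by
  ext t
  simp only [mem_preimage, mem_ball, dist_emb2, hx, mem_empty_iff_false, iff_false, not_lt]
  calc r ≤ c := hrc
    _ = Real.sqrt ((c - 0)^2) := by simp [Real.sqrt_sq_eq_abs, abs_of_pos hc]
    _ ≤ Real.sqrt ((t - x 0)^2 + (c - 0)^2) :=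
        Real.sqrt_le_sqrt (le_add_of_nonneg_left (by positivity))

section Phi
variable {φ : EuclideanSpace ℝ (Fin 2) → ℝ} {x : EuclideanSpace ℝ (Fin 2)} {r : ℝ}

lemma comp_support (c : ℝ) (hs : support φ ⊆ ball x r) :
    support (fun t => φ (emb2 c t)) ⊆ Ioo (x 0 - r) (x 0 + r) := by
  intro t ht
  exact preimage_ball_subset c r x (hs ht)

lemma comp_compactsupport (c : ℝ) (hs : support φ ⊆ ball x r) :
    HasCompactSupport (fun t => φ (emb2 c t)) := by
  apply HasCompactSupport.intro (isCompact_Icc (a := x 0 - r) (b := x 0 + r))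
  intro t ht
  by_contra hne
  exact ht (Ioo_subset_Icc_self (comp_support c hs hne))

lemma comp_integrable (c : ℝ) (hφ : LipschitzWith 1 φ) (hs : support φ ⊆ ball x r) :
    Integrable (fun t => φ (emb2 c t)) volume :=
  ((hφ.continuous).comp (isometry_emb2 c).continuous).integrable_of_hasCompactSupport
    (comp_compactsupport c hs)

lemma integral_line (c : ℝ) :
    ∫ y, φ y ∂((μH[(1:ℝ)]).restrict {p : EuclideanSpace ℝ (Fin 2) | p 1 = c})
      = ∫ t, φ (emb2 c t) := by
  rw [restrict_line, (me_emb2 c).integral_map]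

lemma integrable_line (c : ℝ) (hφ : LipschitzWith 1 φ) (hs : support φ ⊆ ball x r) :
    Integrable φ ((μH[(1:ℝ)]).restrict {p : EuclideanSpace ℝ (Fin 2) | p 1 = c}) := by
  rw [restrict_line, (me_emb2 c).integrable_map_iff]
  exact comp_integrable c hφ hs

lemma integral_mu1 (h a : ℝ) (ha : 0 < a) (ha2 : a ≤ 1/2)
    (hφ : LipschitzWith 1 φ) (hs : support φ ⊆ ball x r) :
    ∫ y, φ y ∂(ENNReal.ofReal (1 - a) •
        (μH[(1:ℝ)]).restrict {p : EuclideanSpace ℝ (Fin 2) | p 1 = 0}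
      + ENNReal.ofReal a •
        (μH[(1:ℝ)]).restrict {p : EuclideanSpace ℝ (Fin 2) | p 1 = h})
      = (1 - a) * (∫ t, φ (emb2 0 t)) + a * (∫ t, φ (emb2 h t)) := by
  have i0 := integrable_line (φ := φ) (x := x) (r := r) 0 hφ hs
  have ih := integrable_line (φ := φ) (x := x) (r := r) h hφ hs
  rw [integral_add_measure (i0.smul_measure ENNReal.ofReal_ne_top)
    (ih.smul_measure ENNReal.ofReal_ne_top),
    integral_smul_measure, integral_smul_measure,
    ENNReal.toReal_ofReal (by linarith), ENNReal.toReal_ofReal (by linarith),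
    integral_line, integral_line]
  simp [smul_eq_mul]

lemma integral_smul_line (c b : ℝ) (hb : 0 ≤ b) :
    ∫ y, φ y ∂(ENNReal.ofReal b •
        (μH[(1:ℝ)]).restrict {p : EuclideanSpace ℝ (Fin 2) | p 1 = c})
      = b * (∫ t, φ (emb2 c t)) := by
  rw [integral_smul_measure, ENNReal.toReal_ofReal hb, integral_line]
  simp [smul_eq_mul]

end Phi

lemma FB_zero_mem {n : ℕ} (B : Set (EuclideanSpace ℝ (Fin n)))
    (σ ν : Measure (EuclideanSpace ℝ (Fin n))) :
    (0:ℝ) ∈ { t : ℝ | ∃ φ : EuclideanSpace ℝ (Fin n) → ℝ,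
      LipschitzWith 1 φ ∧ Function.support φ ⊆ B ∧
      t = |(∫ y, φ y ∂σ) - (∫ y, φ y ∂ν)| } := by
  refine ⟨fun _ => 0, ?_, ?_, ?_⟩
  · exact LipschitzWith.of_dist_le_mul (fun p q => by simp [dist_nonneg])
  · simp [Function.support]
  · simp

lemma FB_nonneg {n : ℕ} (B : Set (EuclideanSpace ℝ (Fin n)))
    (σ ν : Measure (EuclideanSpace ℝ (Fin n))) : 0 ≤ FB B σ ν :=
  Real.sSup_nonneg' ⟨0, FB_zero_mem B σ ν, le_rfl⟩

/-- The `x`-axis direction vector. -/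
def vX : EuclideanSpace ℝ (Fin 2) := EuclideanSpace.single 0 1

@[simp] lemma vX_apply0 : vX 0 = 1 := by simp [vX]
@[simp] lemma vX_apply1 : vX 1 = 0 := by simp [vX]

/-- The `x`-axis as an affine subspace. -/
def Laff : AffineSubspace ℝ (EuclideanSpace ℝ (Fin 2)) :=
  (Submodule.span ℝ {vX}).toAffineSubspace

lemma Laff_coe : (Laff : Set (EuclideanSpace ℝ (Fin 2))) = {p | p 1 = 0} := by
  ext p
  simp only [Laff, mem_setOf_eq, SetLike.mem_coe, Submodule.mem_toAffineSubspace,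
    Submodule.mem_span_singleton]
  constructor
  · rintro ⟨c, rfl⟩
    simp [PiLp.smul_apply]
  · intro hp
    refine ⟨p 0, ?_⟩
    ext i
    fin_cases i <;> simp [PiLp.smul_apply, hp]

lemma Laff_plane : IsAffineDPlane 1 Laff := by
  constructor
  · exact ⟨0, by simp [Laff, Submodule.mem_toAffineSubspace]⟩
  · rw [Laff, Submodule.toAffineSubspace_direction]
    apply finrank_span_singleton
    intro hv
    have h0 : vX 0 = 0 := by rw [hv]; rfl
    simp at h0


end Aux

/-- For `μ₁ = (1−a)·H¹|_L + a·H¹|_{L(h)}` with `0 < a ≤ 1/2` and `x ∈ L`: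
`α_{μ₁}¹(x,r) = 0` for `0 < r ≤ h`, and `α_{μ₁}¹(x,r) ≤ C·a·h/r` for `r > h`. -/
theorem statement16 :
    ∃ C : ℝ, 0 < C ∧
      ∀ (h : ℝ), 0 < h → ∀ (a : ℝ), 0 < a → a ≤ 1/2 →
      ∀ (L L' : Set (EuclideanSpace ℝ (Fin 2))),
        L = {p : EuclideanSpace ℝ (Fin 2) | p 1 = 0} →
        L' = {p : EuclideanSpace ℝ (Fin 2) | p 1 = h} →
      ∀ μ₁ : Measure (EuclideanSpace ℝ (Fin 2)),
        μ₁ = ENNReal.ofReal (1 - a) • (μH[(1:ℝ)]).restrict L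
            + ENNReal.ofReal a • (μH[(1:ℝ)]).restrict L' →
      ∀ x ∈ L,
        (∀ r : ℝ, 0 < r → r ≤ h → alphaCoef 1 μ₁ x r = 0) ∧
        (∀ r : ℝ, h < r → alphaCoef 1 μ₁ x r ≤ C * a * h / r) := by
  refine ⟨2, by norm_num, ?_⟩
  intro h hh a ha ha2 L L' hL hL' μ₁ hμ x hx
  subst hL; subst hL'; subst hμ
  have hx1 : x 1 = 0 := hx
  set μ₁ : Measure (EuclideanSpace ℝ (Fin 2)) :=
    ENNReal.ofReal (1 - a) • (μH[(1:ℝ)]).restrict {p : EuclideanSpace ℝ (Fin 2) | p 1 = 0}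
      + ENNReal.ofReal a • (μH[(1:ℝ)]).restrict {p : EuclideanSpace ℝ (Fin 2) | p 1 = h}
    with hμdef
  constructor
  · -- Part (i): 0 < r ≤ h
    intro r hr hrh
    have hSinf : sInf { t : ℝ | ∃ (c : ℝ) (Lf : AffineSubspace ℝ (EuclideanSpace ℝ (Fin 2))),
        0 ≤ c ∧ IsAffineDPlane 1 Lf ∧
        t = FB (ball x r) μ₁
          ((ENNReal.ofReal c) • (μH[((1:ℕ):ℝ)]).restrict
            (Lf : Set (EuclideanSpace ℝ (Fin 2)))) } = 0 := by
      have hmem : (0:ℝ) ∈ { t : ℝ | ∃ (c : ℝ) (Lf : AffineSubspace ℝ (EuclideanSpace ℝ (Fin 2))),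
          0 ≤ c ∧ IsAffineDPlane 1 Lf ∧
          t = FB (ball x r) μ₁
            ((ENNReal.ofReal c) • (μH[((1:ℕ):ℝ)]).restrict
              (Lf : Set (EuclideanSpace ℝ (Fin 2)))) } := by
        refine ⟨1 - a, Laff, by linarith, Laff_plane, ?_⟩
        rw [Laff_coe, Nat.cast_one]
        -- show `FB … = 0`
        refine (le_antisymm ?_ (FB_nonneg _ _ _)).symm
        apply Real.sSup_le _ le_rfl
        rintro t ⟨φ, hφ, hs, rfl⟩
        have hIh : (∫ t, φ (emb2 h t)) = 0 := by
          have hz : ∀ t : ℝ, φ (emb2 h t) = 0 := by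
            intro t
            by_contra hne
            have : emb2 h t ∈ ball x r := hs hne
            have : t ∈ (emb2 h) ⁻¹' (ball x r) := this
            rw [preimage_ball_empty h r hrh hh x hx1] at this
            exact this
          simp [hz]
        rw [hμdef, integral_mu1 h a ha ha2 hφ hs, integral_smul_line 0 (1-a) (by linarith), hIh]
        simp [abs_nonneg]
      have hbdd : BddBelow { t : ℝ | ∃ (c : ℝ) (Lf : AffineSubspace ℝ (EuclideanSpace ℝ (Fin 2))),
          0 ≤ c ∧ IsAffineDPlane 1 Lf ∧
          t = FB (ball x r) μ₁
            ((ENNReal.ofReal c) • (μH[((1:ℕ):ℝ)]).restrict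
              (Lf : Set (EuclideanSpace ℝ (Fin 2)))) } := by
        refine ⟨0, ?_⟩
        rintro t ⟨c, Lf, hc, hpl, rfl⟩
        exact FB_nonneg _ _ _
      refine le_antisymm (csInf_le hbdd hmem) (Real.sInf_nonneg ?_)
      rintro t ⟨c, Lf, hc, hpl, rfl⟩
      exact FB_nonneg _ _ _
    unfold alphaCoef
    rw [hSinf, mul_zero]
  · -- Part (ii): r > h
    intro r hrh
    have hr : 0 < r := hh.trans hrh
    -- the candidate FB value with c = 1 and L = x-axis
    set t₀ : ℝ := FB (ball x r) μ₁
      ((ENNReal.ofReal (1:ℝ)) • (μH[((1:ℕ):ℝ)]).restrict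
        (Laff : Set (EuclideanSpace ℝ (Fin 2)))) with ht₀def
    have ht₀le : t₀ ≤ 2 * a * r * h := by
      rw [ht₀def]
      apply Real.sSup_le _ (by positivity)
      rintro t ⟨φ, hφ, hs, rfl⟩
      rw [Laff_coe, Nat.cast_one] at *
      have i0 := comp_integrable (φ := φ) (x := x) (r := r) 0 hφ hs
      have ih := comp_integrable (φ := φ) (x := x) (r := r) h hφ hs
      have key : (∫ y, φ y ∂μ₁) - (∫ y, φ y ∂((ENNReal.ofReal (1:ℝ)) •
          (μH[(1:ℝ)]).restrict {p : EuclideanSpace ℝ (Fin 2) | p 1 = 0}))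
          = a * ((∫ t, φ (emb2 h t)) - (∫ t, φ (emb2 0 t))) := by
        rw [hμdef, integral_mu1 h a ha ha2 hφ hs, integral_smul_line 0 1 zero_le_one]
        ring
      have hbound : |(∫ t, φ (emb2 h t)) - (∫ t, φ (emb2 0 t))| ≤ 2 * r * h := by
        rw [← integral_sub ih i0]
        set g : ℝ → ℝ := fun t => φ (emb2 h t) - φ (emb2 0 t) with hgdef
        have hg0 : ∀ t ∉ Icc (x 0 - r) (x 0 + r), g t = 0 := by
          intro t ht
          have h1 : φ (emb2 h t) = 0 := by
            by_contra hne
            exact ht (Ioo_subset_Icc_self (comp_support h hs hne))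
          have h2 : φ (emb2 0 t) = 0 := by
            by_contra hne
            exact ht (Ioo_subset_Icc_self (comp_support 0 hs hne))
          simp [hgdef, h1, h2]
        have hgle : ∀ t ∈ Icc (x 0 - r) (x 0 + r), |g t| ≤ h := by
          intro t _
          have := hφ.dist_le_mul (emb2 h t) (emb2 0 t)
          rw [dist_emb2_emb2] at this
          simp only [Real.dist_eq, NNReal.coe_one, one_mul] at this
          calc |g t| = |φ (emb2 h t) - φ (emb2 0 t)| := rfl
            _ ≤ |h - 0| := this
            _ = h := by rw [sub_zero, abs_of_pos hh]
        have hint : (∫ t, g t) = ∫ t in Icc (x 0 - r) (x 0 + r), g t :=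
          (setIntegral_eq_integral_of_forall_compl_eq_zero hg0).symm
        have hgi : Integrable g volume := ih.sub i0
        calc |∫ t, g t| = |∫ t in Icc (x 0 - r) (x 0 + r), g t| := by rw [hint]
          _ ≤ ∫ t in Icc (x 0 - r) (x 0 + r), |g t| := by
              simpa using norm_integral_le_integral_norm (μ := volume.restrict _) g
          _ ≤ ∫ _ in Icc (x 0 - r) (x 0 + r), h := by
              apply setIntegral_mono_on (hgi.abs.integrableOn)
                (integrableOn_const (by rw [Real.volume_Icc]; exact ENNReal.ofReal_ne_top))
                measurableSet_Icc hgle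
          _ = (volume (Icc (x 0 - r) (x 0 + r))).toReal * h := by
              rw [setIntegral_const, smul_eq_mul]; rfl
          _ = 2 * r * h := by
              rw [Real.volume_Icc, ENNReal.toReal_ofReal (by linarith)]
              ring
      calc |(∫ y, φ y ∂μ₁) - _| = a * |(∫ t, φ (emb2 h t)) - (∫ t, φ (emb2 0 t))| := by
            rw [key, abs_mul, abs_of_pos ha]
        _ ≤ a * (2 * r * h) := by
            exact mul_le_mul_of_nonneg_left hbound ha.le
        _ = 2 * a * r * h := by ring
    -- measure of the ball
    have hb0 : ((μH[(1:ℝ)]).restrict {p : EuclideanSpace ℝ (Fin 2) | p 1 = 0}) (ball x r)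
        = ENNReal.ofReal (2 * r) := by
      rw [restrict_line, Measure.map_apply (me_emb2 0).measurable measurableSet_ball,
        preimage_ball_eq r hr x hx1, Real.volume_Ioo]
      ring_nf
    have hbh : ((μH[(1:ℝ)]).restrict {p : EuclideanSpace ℝ (Fin 2) | p 1 = h}) (ball x r)
        ≤ ENNReal.ofReal (2 * r) := by
      rw [restrict_line, Measure.map_apply (me_emb2 h).measurable measurableSet_ball]
      calc volume ((emb2 h) ⁻¹' (ball x r)) ≤ volume (Ioo (x 0 - r) (x 0 + r)) :=
            measure_mono (preimage_ball_subset h r x)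
        _ = ENNReal.ofReal (2 * r) := by rw [Real.volume_Ioo]; ring_nf
    have hμball : μ₁ (ball x r) = ENNReal.ofReal (1 - a) * ENNReal.ofReal (2 * r)
        + ENNReal.ofReal a * (((μH[(1:ℝ)]).restrict
            {p : EuclideanSpace ℝ (Fin 2) | p 1 = h}) (ball x r)) := by
      rw [hμdef]
      simp [Measure.add_apply, Measure.smul_apply, smul_eq_mul, hb0]
    have hfin : μ₁ (ball x r) ≠ ⊤ := by
      rw [hμball]
      exact (ENNReal.add_lt_top.2 ⟨ENNReal.mul_lt_top ENNReal.ofReal_lt_top ENNReal.ofReal_lt_top,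
        ENNReal.mul_lt_top ENNReal.ofReal_lt_top (hbh.trans_lt ENNReal.ofReal_lt_top)⟩).ne
    have hge : ENNReal.ofReal r ≤ μ₁ (ball x r) := by
      rw [hμball]
      calc ENNReal.ofReal r ≤ ENNReal.ofReal ((1 - a) * (2 * r)) := by
            apply ENNReal.ofReal_le_ofReal; nlinarith
        _ = ENNReal.ofReal (1 - a) * ENNReal.ofReal (2 * r) := by
            rw [ENNReal.ofReal_mul (by linarith)]
        _ ≤ _ := le_add_of_nonneg_right zero_le
    set m : ℝ := (μ₁ (ball x r)).toReal with hmdef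
    have hm : r ≤ m := by
      have := ENNReal.toReal_mono hfin hge
      rwa [ENNReal.toReal_ofReal hr.le] at this
    have hm0 : 0 < m := hr.trans_le hm
    -- sInf bounds
    have hmemt₀ : t₀ ∈ { t : ℝ | ∃ (c : ℝ) (Lf : AffineSubspace ℝ (EuclideanSpace ℝ (Fin 2))),
        0 ≤ c ∧ IsAffineDPlane 1 Lf ∧
        t = FB (ball x r) μ₁
          ((ENNReal.ofReal c) • (μH[((1:ℕ):ℝ)]).restrict
            (Lf : Set (EuclideanSpace ℝ (Fin 2)))) } :=
      ⟨1, Laff, zero_le_one, Laff_plane, by rw [ht₀def, Nat.cast_one]⟩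
    have hbdd : BddBelow { t : ℝ | ∃ (c : ℝ) (Lf : AffineSubspace ℝ (EuclideanSpace ℝ (Fin 2))),
        0 ≤ c ∧ IsAffineDPlane 1 Lf ∧
        t = FB (ball x r) μ₁
          ((ENNReal.ofReal c) • (μH[((1:ℕ):ℝ)]).restrict
            (Lf : Set (EuclideanSpace ℝ (Fin 2)))) } := by
      refine ⟨0, ?_⟩
      rintro t ⟨c, Lf, hc, hpl, rfl⟩
      exact FB_nonneg _ _ _
    have hsle : sInf { t : ℝ | ∃ (c : ℝ) (Lf : AffineSubspace ℝ (EuclideanSpace ℝ (Fin 2))),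
        0 ≤ c ∧ IsAffineDPlane 1 Lf ∧
        t = FB (ball x r) μ₁
          ((ENNReal.ofReal c) • (μH[((1:ℕ):ℝ)]).restrict
            (Lf : Set (EuclideanSpace ℝ (Fin 2)))) } ≤ t₀ := csInf_le hbdd hmemt₀
    unfold alphaCoef
    rw [← hmdef]
    calc (1 / (r * m)) * sInf _ ≤ (1 / (r * m)) * (2 * a * r * h) := by
          apply mul_le_mul_of_nonneg_left (hsle.trans ht₀le) (by positivity)
      _ = 2 * a * h / m := by field_simp
      _ ≤ 2 * a * h / r := by
          apply div_le_div_of_nonneg_left (by positivity) hr hm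
      _ = 2 * a * h / r := rfl

end
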